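/- The function g(u) = E(u)²·(3·E(u)² - 4·u·E(u) + u² - 2) is strictly decreasing on [0,∞); in particular g(u) ≤ g(0) for all u ≥ 0. Moreover g(0) = 12/π² - 4/π = -4(π - 3)/π². -/

import Mathlib

open MeasureTheory Real Filter Topology

/-- The standard normal density. -/
noncomputable def gphi (u : ℝ) : ℝ := Real.exp (-u ^ 2 / 2) / Real.sqrt (2 * Real.pi)

/-- The standard normal CDF. -/
noncomputable def gPhi (u : ℝ) : ℝ := ∫ s in Set.Iic u, gphi s

/-- The standard normal tail. -/
noncomputable def gPhiBar (u : ℝ) : ℝ := 1 - gPhi u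

/-- The inverse Mills ratio. -/
noncomputable def mills (u : ℝ) : ℝ := gphi u / gPhiBar u

/-- P(r) = E[tanh²(√r Z)]. -/
noncomputable def Pfun (r : ℝ) : ℝ := ∫ z : ℝ, Real.tanh (Real.sqrt r * z) ^ 2 * gphi z

/-- B(q). -/
noncomputable def Bfun (κ q : ℝ) : ℝ :=
  (1 - q) * ∫ z : ℝ, mills ((κ - Real.sqrt q * z) / Real.sqrt (1 - q)) ^ 2 * gphi z

/-- C_κ. -/
noncomputable def Ckappa (κ : ℝ) : ℝ := ∫ z : ℝ, max (κ - z) 0 ^ 2 * gphi z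

/-- The critical capacity. -/
noncomputable def alphac (κ : ℝ) : ℝ := 2 / (Real.pi * Ckappa κ)

/-- g(u) = E(u)²(3E(u)² - 4uE(u) + u² - 2). -/
noncomputable def gfun (u : ℝ) : ℝ :=
  mills u ^ 2 * (3 * mills u ^ 2 - 4 * u * mills u + u ^ 2 - 2)

/-! ### Basic facts about the Gaussian density -/

lemma sqrt2pi_pos : 0 < Real.sqrt (2 * Real.pi) := Real.sqrt_pos.2 (by positivity)

lemma gphi_pos (u : ℝ) : 0 < gphi u := div_pos (Real.exp_pos _) sqrt2pi_pos

lemma gphi_eq : gphi = fun u => Real.exp (-(1/2) * u ^ 2) * (Real.sqrt (2 * Real.pi))⁻¹ := by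
  funext u
  unfold gphi
  rw [div_eq_mul_inv]
  ring_nf

lemma gphi_cont : Continuous gphi := by
  rw [gphi_eq]
  exact (Real.continuous_exp.comp (by continuity)).mul continuous_const

lemma gphi_integrable : Integrable gphi := by
  rw [gphi_eq]
  exact (integrable_exp_neg_mul_sq (by norm_num : (0:ℝ) < 1/2)).mul_const _

lemma gphi_integral : ∫ u, gphi u = 1 := by
  rw [gphi_eq]
  rw [MeasureTheory.integral_mul_const]
  rw [integral_gaussian]
  rw [show Real.pi / (1/2 : ℝ) = 2 * Real.pi by ring]
  exact mul_inv_cancel₀ sqrt2pi_pos.ne'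

lemma gphi_hasDeriv (u : ℝ) : HasDerivAt gphi (-u * gphi u) u := by
  rw [gphi_eq]
  have h1 : HasDerivAt (fun u : ℝ => -(1/2) * u ^ 2) (-u) u := by
    have := (hasDerivAt_pow 2 u).const_mul (-(1/2) : ℝ)
    refine this.congr_deriv ?_
    all_goals (push_cast; ring)
  have h2 := (h1.exp).mul_const (Real.sqrt (2 * Real.pi))⁻¹
  refine h2.congr_deriv ?_
  ring

lemma gphi_tendsto_zero : Tendsto gphi atTop (𝓝 0) := by
  rw [gphi_eq]
  have h1 : Tendsto (fun u : ℝ => -(1/2) * u ^ 2) atTop atBot :=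
    Tendsto.const_mul_atTop_of_neg (by norm_num) (tendsto_pow_atTop (by norm_num))
  have h2 := Real.tendsto_exp_atBot.comp h1
  have h3 := h2.mul_const (Real.sqrt (2 * Real.pi))⁻¹
  simpa using h3

lemma gPhiBar_eq (u : ℝ) : gPhiBar u = ∫ s in Set.Ioi u, gphi s := by
  have h := intervalIntegral.integral_Iic_add_Ioi (b := u) (f := gphi) (μ := volume)
    gphi_integrable.integrableOn gphi_integrable.integrableOn
  rw [gphi_integral] at h
  unfold gPhiBar gPhi
  linarith

lemma gPhiBar_pos (u : ℝ) : 0 < gPhiBar u := by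
  rw [gPhiBar_eq]
  rw [setIntegral_pos_iff_support_of_nonneg_ae
    (by filter_upwards with x using (gphi_pos x).le) gphi_integrable.integrableOn]
  have hsub : Set.Ioi u ⊆ Function.support gphi :=
    fun x _ => Function.mem_support.2 (gphi_pos x).ne'
  rw [Set.inter_eq_right.mpr hsub, Real.volume_Ioi]
  simp

lemma gPhi_hasDeriv (u : ℝ) : HasDerivAt gPhi (gphi u) u := by
  have key : gPhi = fun v => gPhi 0 + ∫ x in (0:ℝ)..v, gphi x := by
    funext v
    have h := intervalIntegral.integral_Iic_sub_Iic (a := (0:ℝ)) (b := v) (μ := volume)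
      gphi_integrable.integrableOn gphi_integrable.integrableOn
    unfold gPhi
    unfold gPhi at h
    linarith
  rw [key]
  refine HasDerivAt.const_add _ ?_
  exact intervalIntegral.integral_hasDerivAt_right gphi_integrable.intervalIntegrable
    (gphi_cont.stronglyMeasurableAtFilter _ _) gphi_cont.continuousAt

lemma gPhiBar_hasDeriv (u : ℝ) : HasDerivAt gPhiBar (-gphi u) u := by
  have h := (gPhi_hasDeriv u).const_sub 1
  exact h

lemma mills_hasDeriv (u : ℝ) : HasDerivAt mills (mills u ^ 2 - u * mills u) u := by
  have h := (gphi_hasDeriv u).div (gPhiBar_hasDeriv u) (gPhiBar_pos u).ne'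
  have h2 : HasDerivAt (fun v => gphi v / gPhiBar v) (mills u ^ 2 - u * mills u) u := by
    refine h.congr_deriv ?_
    unfold mills
    have hb := (gPhiBar_pos u).ne'
    field_simp
    ring
  exact h2

lemma mills_pos (u : ℝ) : 0 < mills u := div_pos (gphi_pos u) (gPhiBar_pos u)

/-! ### The lower bound `mills u > u` -/

lemma integrable_mul_gphi : Integrable (fun s : ℝ => s * gphi s) := by
  have h : (fun s : ℝ => s * gphi s)
      = fun s => (s * Real.exp (-(1/2) * s ^ 2)) * (Real.sqrt (2 * Real.pi))⁻¹ := by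
    funext s
    rw [gphi_eq]
    ring
  rw [h]
  exact (integrable_mul_exp_neg_mul_sq (by norm_num : (0:ℝ) < 1/2)).mul_const _

lemma integral_mul_gphi_Ioi (u : ℝ) : ∫ s in Set.Ioi u, s * gphi s = gphi u := by
  have hder : ∀ x ∈ Set.Ici u, HasDerivAt (fun s => -gphi s) (x * gphi x) x := by
    intro x _
    have := (gphi_hasDeriv x).neg
    refine this.congr_deriv ?_
    ring
  have htend : Tendsto (fun s => -gphi s) atTop (𝓝 0) := by
    have := gphi_tendsto_zero.neg
    simpa using this
  have h := integral_Ioi_of_hasDerivAt_of_tendsto' hder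
    integrable_mul_gphi.integrableOn htend
  rw [h]
  ring

lemma gphi_sub_mul_pos (u : ℝ) : 0 < gphi u - u * gPhiBar u := by
  have hint : IntegrableOn (fun s => (s - u) * gphi s) (Set.Ioi u) := by
    have h : (fun s : ℝ => (s - u) * gphi s) = fun s => s * gphi s - u * gphi s := by
      funext s; ring
    rw [h]
    exact (integrable_mul_gphi.integrableOn).sub ((gphi_integrable.integrableOn).const_mul u)
  have hpos : 0 < ∫ s in Set.Ioi u, (s - u) * gphi s := by
    rw [setIntegral_pos_iff_support_of_nonneg_ae _ hint]
    · have hsub : Set.Ioi u ⊆ Function.support (fun s => (s - u) * gphi s) := by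
        intro x hx
        have hx' : u < x := hx
        exact Function.mem_support.2 (ne_of_gt (mul_pos (by linarith) (gphi_pos x)))
      rw [Set.inter_eq_right.mpr hsub, Real.volume_Ioi]
      simp
    · rw [EventuallyLE, ae_restrict_iff' measurableSet_Ioi]
      filter_upwards with s hs
      have hus : u < s := hs
      exact (mul_pos (by linarith) (gphi_pos s)).le
  have hsplit : ∫ s in Set.Ioi u, (s - u) * gphi s
      = (∫ s in Set.Ioi u, s * gphi s) - ∫ s in Set.Ioi u, u * gphi s := by
    rw [← integral_sub (integrable_mul_gphi.integrableOn)
      ((gphi_integrable.integrableOn).const_mul u)]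
    congr 1
    funext s
    ring
  rw [hsplit, integral_mul_gphi_Ioi, MeasureTheory.integral_const_mul, ← gPhiBar_eq] at hpos
  linarith

lemma mills_sub_pos (u : ℝ) : 0 < mills u - u := by
  have h := gphi_sub_mul_pos u
  have hb := gPhiBar_pos u
  have : mills u - u = (gphi u - u * gPhiBar u) / gPhiBar u := by
    unfold mills
    field_simp
  rw [this]
  positivity

lemma gPhiBar_tendsto_zero : Tendsto gPhiBar atTop (𝓝 0) := by
  apply squeeze_zero' (Eventually.of_forall fun u => (gPhiBar_pos u).le) _ gphi_tendsto_zero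
  filter_upwards [eventually_ge_atTop (1:ℝ)] with u hu
  have h := gphi_sub_mul_pos u
  nlinarith [gPhiBar_pos u]

/-! ### The continued-fraction upper bound on the Mills ratio -/

lemma cf6_denom_pos (v : ℝ) : 0 < v^6 + 15*v^4 + 45*v^2 + 15 := by positivity

lemma cf6 (u : ℝ) : gphi u * (u^5 + 14*u^3 + 33*u) < gPhiBar u * (u^6 + 15*u^4 + 45*u^2 + 15) := by
  set F : ℝ → ℝ := fun v =>
    gPhiBar v - gphi v * ((v^5 + 14*v^3 + 33*v) / (v^6 + 15*v^4 + 45*v^2 + 15)) with hF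
  have hFder : ∀ v : ℝ, HasDerivAt F (-720 * gphi v / (v^6 + 15*v^4 + 45*v^2 + 15)^2) v := by
    intro v
    have hN : HasDerivAt (fun v : ℝ => v^5 + 14*v^3 + 33*v) (5*v^4 + 42*v^2 + 33) v := by
      have e5 : HasDerivAt (fun v : ℝ => v^5) (5*v^4) v := by
        simpa using hasDerivAt_pow 5 v
      have e3 : HasDerivAt (fun v : ℝ => v^3) (3*v^2) v := by
        simpa using hasDerivAt_pow 3 v
      have e1 : HasDerivAt (fun v : ℝ => v) 1 v := hasDerivAt_id' v
      have := (e5.add (e3.const_mul (14:ℝ))).add (e1.const_mul (33:ℝ))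
      refine this.congr_deriv ?_
      ring
    have hD : HasDerivAt (fun v : ℝ => v^6 + 15*v^4 + 45*v^2 + 15)
        (6*v^5 + 60*v^3 + 90*v) v := by
      have e6 : HasDerivAt (fun v : ℝ => v^6) (6*v^5) v := by
        simpa using hasDerivAt_pow 6 v
      have e4 : HasDerivAt (fun v : ℝ => v^4) (4*v^3) v := by
        simpa using hasDerivAt_pow 4 v
      have e2 : HasDerivAt (fun v : ℝ => v^2) (2*v) v := by
        simpa using hasDerivAt_pow 2 v
      have := ((e6.add (e4.const_mul (15:ℝ))).add (e2.const_mul (45:ℝ))).add_const (15:ℝ)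
      refine this.congr_deriv ?_
      ring
    have hq := hN.div hD (cf6_denom_pos v).ne'
    have hcomb := (gPhiBar_hasDeriv v).sub ((gphi_hasDeriv v).mul hq)
    refine hcomb.congr_deriv ?_
    have hden := (cf6_denom_pos v).ne'
    simp only [Pi.div_apply]
    field_simp
    ring
  have hFanti : StrictAnti F := by
    apply strictAnti_of_deriv_neg
    intro v
    rw [(hFder v).deriv]
    apply div_neg_of_neg_of_pos
    · nlinarith [gphi_pos v]
    · positivity
  have hF0 : Tendsto F atTop (𝓝 0) := by
    have h2 : Tendsto (fun v : ℝ =>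
        gphi v * ((v^5 + 14*v^3 + 33*v) / (v^6 + 15*v^4 + 45*v^2 + 15))) atTop (𝓝 0) := by
      apply squeeze_zero' ?hle ?hge gphi_tendsto_zero
      case hle =>
        filter_upwards [eventually_ge_atTop (0:ℝ)] with v hv
        have h1 : 0 ≤ v^5 + 14*v^3 + 33*v := by positivity
        have h2 := (cf6_denom_pos v).le
        exact mul_nonneg (gphi_pos v).le (div_nonneg h1 h2)
      case hge =>
        filter_upwards [eventually_ge_atTop (1:ℝ)] with v hv
        have hq0 : 0 ≤ (v^5 + 14*v^3 + 33*v) / (v^6 + 15*v^4 + 45*v^2 + 15) := by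
          have h1 : 0 ≤ v^5 + 14*v^3 + 33*v := by positivity
          have h2 := (cf6_denom_pos v).le
          exact div_nonneg h1 h2
        have hle : (v^5 + 14*v^3 + 33*v) / (v^6 + 15*v^4 + 45*v^2 + 15) ≤ 1 := by
          rw [div_le_one (cf6_denom_pos v)]
          nlinarith [sq_nonneg v, sq_nonneg (v-1), sq_nonneg (v^2-1), sq_nonneg (v^2-v),
            pow_le_pow_left₀ (by linarith : (0:ℝ) ≤ 1) hv 2]
        nlinarith [gphi_pos v]
    have := gPhiBar_tendsto_zero.sub h2
    simpa using this
  have hFpos : 0 < F u := by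
    have h1 : F (u+1) < F u := hFanti (lt_add_one u)
    have h2 : 0 ≤ F (u+1) := by
      refine le_of_tendsto hF0 ?_
      filter_upwards [eventually_ge_atTop (u+1)] with v hv
      exact hFanti.antitone hv
    linarith
  rw [hF] at hFpos
  simp only at hFpos
  have hd := cf6_denom_pos u
  have h1 : gphi u * (u^5 + 14*u^3 + 33*u) / (u^6 + 15*u^4 + 45*u^2 + 15) < gPhiBar u := by
    rw [mul_div_assoc]
    linarith
  exact (div_lt_iff₀ hd).1 h1

/-! ### The auxiliary function H and its negativity -/

/-- `H(u) = 6E³ - 12uE² + (7u²-4)E - u³ + 3u`, which is `g'(u)/(2E²)`. -/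
noncomputable def Hfun (u : ℝ) : ℝ :=
  6*(mills u)^3 - 12*u*(mills u)^2 + (7*u^2 - 4)*(mills u) - u^3 + 3*u

lemma Hfun_hasDeriv (u : ℝ) : HasDerivAt Hfun
    ((18*(mills u)^2 - 24*u*(mills u) + 7*u^2 - 4) * ((mills u)^2 - u*(mills u))
      + (-12*(mills u)^2 + 14*u*(mills u) - 3*u^2 + 3)) u := by
  have hm := mills_hasDeriv u
  have hm3 : HasDerivAt (fun v => (mills v)^3) (3*(mills u)^2*((mills u)^2 - u*mills u)) u := by
    have := hm.pow 3
    refine this.congr_deriv ?_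
    all_goals (push_cast; ring)
  have hm2 : HasDerivAt (fun v => (mills v)^2) (2*(mills u)*((mills u)^2 - u*mills u)) u := by
    have := hm.pow 2
    refine this.congr_deriv ?_
    all_goals (push_cast; ring)
  have h1 : HasDerivAt (fun v => 6*(mills v)^3)
      (6*(3*(mills u)^2*((mills u)^2 - u*mills u))) u := hm3.const_mul (6:ℝ)
  have h2 : HasDerivAt (fun v => 12*v*(mills v)^2)
      (12*(mills u)^2 + (12*u)*(2*(mills u)*((mills u)^2 - u*mills u))) u := by
    have hid : HasDerivAt (fun v : ℝ => 12*v) 12 u := by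
      simpa using (hasDerivAt_id u).const_mul (12:ℝ)
    exact hid.mul hm2
  have hp : HasDerivAt (fun v : ℝ => 7*v^2 - 4) (14*u) u := by
    have e2 : HasDerivAt (fun v : ℝ => v^2) (2*u) u := by
      simpa using hasDerivAt_pow 2 u
    have := (e2.const_mul (7:ℝ)).sub_const (4:ℝ)
    refine this.congr_deriv ?_
    ring
  have h3 : HasDerivAt (fun v => (7*v^2 - 4)*(mills v))
      ((14*u)*(mills u) + (7*u^2 - 4)*((mills u)^2 - u*mills u)) u := hp.mul hm
  have h4 : HasDerivAt (fun v : ℝ => v^3) (3*u^2) u := by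
    simpa using hasDerivAt_pow 3 u
  have h5 : HasDerivAt (fun v : ℝ => 3*v) (3:ℝ) u := by
    simpa using (hasDerivAt_id u).const_mul (3:ℝ)
  have hcomb := (((h1.sub h2).add h3).sub h4).add h5
  have hfe : Hfun = fun v =>
      6*(mills v)^3 - 12*v*(mills v)^2 + (7*v^2 - 4)*(mills v) - v^3 + 3*v := rfl
  rw [hfe]
  refine hcomb.congr_deriv ?_
  ring

/-! ### Algebraic certificate for the crossing argument -/

lemma cert (t u : ℝ) (ht : 0 < t) (hu : 0 ≤ u)
    (hq : t*u^2 + (6*t^2 - 1)*u + 6*t^3 - 4*t = 0) :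
    0 < (18*t^2 + 12*u*t + u^2 - 4)*(t^2 + u*t - 1) + (6*t^2 + 2*u*t - 1) := by
  have h23 : 3*t^2 ≤ 2 := by
    by_contra hc
    push_neg at hc
    have h1 : 0 ≤ t*u^2 := by positivity
    have h2 : 0 ≤ (6*t^2 - 1)*u := mul_nonneg (by nlinarith) hu
    have h3 : 0 < 6*t^3 - 4*t := by nlinarith
    linarith
  have hid : (1 + 4*t^2 - 8*t^4 - t*(6*t^2+1)*u) * ((4*t^2 + 28*t^4) + t*(6*t^2+1)*u)
      = 2*t^4*(1 + 4*t^2 - 4*t^4) := by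
    linear_combination (-(t*(6*t^2+1)^2)) * hq
  have htu : 0 ≤ t*(6*t^2+1)*u := by
    apply mul_nonneg (mul_nonneg ht.le (by nlinarith [sq_nonneg t])) hu
  have hrhs : 0 < 2*t^4*(1 + 4*t^2 - 4*t^4) := by
    have h4 : 0 < t^4 := pow_pos ht 4
    have h44 : 3*t^4 ≤ 2*t^2 := by nlinarith [sq_nonneg t]
    have hpos2 : 0 < 1 + 4*t^2 - 4*t^4 := by nlinarith [sq_nonneg t]
    exact mul_pos (by linarith) hpos2
  have hfac2 : 0 < (4*t^2 + 28*t^4) + t*(6*t^2+1)*u := by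
    nlinarith [pow_pos ht 2, pow_pos ht 4]
  have hNDu : 0 < 1 + 4*t^2 - 8*t^4 - t*(6*t^2+1)*u := by
    by_contra hc
    push_neg at hc
    nlinarith [mul_nonpos_of_nonpos_of_nonneg hc hfac2.le]
  have hS : (18*t^2 + 12*u*t + u^2 - 4)*(t^2 + u*t - 1) + (6*t^2 + 2*u*t - 1)
      = 3*(1 + 4*t^2 - 8*t^4 - t*(6*t^2+1)*u)
        + (u + 7*t)*(t*u^2 + (6*t^2 - 1)*u + 6*t^3 - 4*t) := by
    ring
  rw [hS, hq]
  linarith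

/-! ### Tail bound: H < 0 for u ≥ 3 -/

lemma poly_tail (u : ℝ) (hu : 3 ≤ u) :
    6*(u^4 + 12*u^2 + 15)^3
      + 6*u*(u^4 + 12*u^2 + 15)^2*(u^5 + 14*u^3 + 33*u)
      + (u^2 - 4)*(u^4 + 12*u^2 + 15)*(u^5 + 14*u^3 + 33*u)^2
      - u*(u^5 + 14*u^3 + 33*u)^3 ≤ 0 := by
  have h9 : 9 ≤ u^2 := by nlinarith
  have h4 : 9*u^2 ≤ u^4 := by nlinarith [sq_nonneg u]
  have h6 : 9*u^4 ≤ u^6 := by nlinarith [sq_nonneg u, sq_nonneg (u^2)]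
  have h8 : 9*u^6 ≤ u^8 := by nlinarith [sq_nonneg u, sq_nonneg (u^3)]
  have h10 : 9*u^8 ≤ u^10 := by nlinarith [sq_nonneg u, sq_nonneg (u^4)]
  have hid : 6*(u^4 + 12*u^2 + 15)^3
      + 6*u*(u^4 + 12*u^2 + 15)^2*(u^5 + 14*u^3 + 33*u)
      + (u^2 - 4)*(u^4 + 12*u^2 + 15)*(u^5 + 14*u^3 + 33*u)^2
      - u*(u^5 + 14*u^3 + 33*u)^3
      = -6*(u^10 + 21*u^8 + 58*u^6 - 966*u^4 - 4635*u^2 - 3375) := by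
    ring
  rw [hid]
  nlinarith [h9, h4, h6, h8, h10]

lemma Hfun_tail (u : ℝ) (hu : 3 ≤ u) : Hfun u < 0 := by
  have hu0 : 0 < u := by linarith
  have ht : 0 < mills u - u := mills_sub_pos u
  have hB : 0 < u^5 + 14*u^3 + 33*u := by positivity
  have hA : 0 < u^4 + 12*u^2 + 15 := by positivity
  have htb : (mills u - u) * (u^5 + 14*u^3 + 33*u) < u^4 + 12*u^2 + 15 := by
    have h := cf6 u
    have h2 : mills u * (u^5 + 14*u^3 + 33*u) < u^6 + 15*u^4 + 45*u^2 + 15 := by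
      unfold mills
      rw [div_mul_eq_mul_div, div_lt_iff₀ (gPhiBar_pos u)]
      nlinarith [h]
    nlinarith [h2]
  have hC := poly_tail u hu
  have hid : (u^4 + 12*u^2 + 15)*(u^5 + 14*u^3 + 33*u)^2 * Hfun u
      = (mills u - u)*(6*(u^4 + 12*u^2 + 15)^3
          + 6*u*(u^4 + 12*u^2 + 15)^2*(u^5 + 14*u^3 + 33*u)
          + (u^2 - 4)*(u^4 + 12*u^2 + 15)*(u^5 + 14*u^3 + 33*u)^2
          - u*(u^5 + 14*u^3 + 33*u)^3)
        - u*(u^5 + 14*u^3 + 33*u)^2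
            *((u^4 + 12*u^2 + 15) - (mills u - u)*(u^5 + 14*u^3 + 33*u))
        + 6*(mills u - u)*(u^4 + 12*u^2 + 15)
            *((mills u - u)*(u^5 + 14*u^3 + 33*u) - (u^4 + 12*u^2 + 15))
            *((mills u - u)*(u^5 + 14*u^3 + 33*u) + (u^4 + 12*u^2 + 15)
              + u*(u^5 + 14*u^3 + 33*u)) := by
    unfold Hfun
    ring
  have r1 : (mills u - u)*(6*(u^4 + 12*u^2 + 15)^3
      + 6*u*(u^4 + 12*u^2 + 15)^2*(u^5 + 14*u^3 + 33*u)
      + (u^2 - 4)*(u^4 + 12*u^2 + 15)*(u^5 + 14*u^3 + 33*u)^2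
      - u*(u^5 + 14*u^3 + 33*u)^3) ≤ 0 := mul_nonpos_of_nonneg_of_nonpos ht.le hC
  have r2 : 0 < u*(u^5 + 14*u^3 + 33*u)^2
      *((u^4 + 12*u^2 + 15) - (mills u - u)*(u^5 + 14*u^3 + 33*u)) :=
    mul_pos (mul_pos hu0 (pow_pos hB 2)) (by linarith)
  have r3 : 6*(mills u - u)*(u^4 + 12*u^2 + 15)
      *((mills u - u)*(u^5 + 14*u^3 + 33*u) - (u^4 + 12*u^2 + 15))
      *((mills u - u)*(u^5 + 14*u^3 + 33*u) + (u^4 + 12*u^2 + 15)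
        + u*(u^5 + 14*u^3 + 33*u)) < 0 := by
    apply mul_neg_of_neg_of_pos
    · apply mul_neg_of_pos_of_neg
      · positivity
      · linarith
    · have h1 : 0 < (mills u - u)*(u^5 + 14*u^3 + 33*u) := mul_pos ht hB
      nlinarith [mul_pos hu0 hB]
  have hlhs : (u^4 + 12*u^2 + 15)*(u^5 + 14*u^3 + 33*u)^2 * Hfun u < 0 := by
    rw [hid]
    linarith
  nlinarith [mul_pos hA (pow_pos hB 2), hlhs]

/-! ### H < 0 on [0, ∞) -/

lemma Hfun_neg (u : ℝ) (hu : 0 ≤ u) : Hfun u < 0 := by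
  by_contra hcon
  push_neg at hcon
  have Hcont : Continuous Hfun := by
    rw [continuous_iff_continuousAt]
    exact fun x => (Hfun_hasDeriv x).continuousAt
  set Z : Set ℝ := {v | 0 ≤ v ∧ 0 ≤ Hfun v} with hZdef
  have hZc : IsClosed Z :=
    (isClosed_le continuous_const continuous_id).inter (isClosed_le continuous_const Hcont)
  have hZsub : Z ⊆ Set.Icc 0 3 := by
    rintro v ⟨hv0, hvH⟩
    refine ⟨hv0, ?_⟩
    by_contra hv3
    push_neg at hv3
    exact absurd hvH (not_le.2 (Hfun_tail v hv3.le))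
  have hZcpt : IsCompact Z := isCompact_Icc.of_isClosed_subset hZc hZsub
  have hne : Z.Nonempty := ⟨u, hu, hcon⟩
  have hmem := hZcpt.sSup_mem hne
  set w := sSup Z with hw
  obtain ⟨hw0, hwH⟩ := hmem
  have hafter : ∀ v, w < v → Hfun v < 0 := by
    intro v hv
    by_contra hvH'
    push_neg at hvH'
    have hvZ : v ∈ Z := ⟨le_trans hw0 hv.le, hvH'⟩
    exact absurd (le_csSup hZcpt.bddAbove hvZ) (not_le.2 hv)
  have hzero : Hfun w = 0 := by
    rcases hwH.lt_or_eq with hlt | heq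
    · exfalso
      have hev : ∀ᶠ v in 𝓝 w, 0 < Hfun v := (Hcont.tendsto w).eventually (eventually_gt_nhds hlt)
      have h1 : ∀ᶠ v in 𝓝[>] w, 0 < Hfun v := hev.filter_mono nhdsWithin_le_nhds
      have h2 : ∀ᶠ v in 𝓝[>] w, w < v := eventually_mem_nhdsWithin
      obtain ⟨v, hv1, hv2⟩ := (h1.and h2).exists
      have := hafter v hv2
      linarith
    · exact heq.symm
  have hd := Hfun_hasDeriv w
  have hDle : (18*(mills w)^2 - 24*w*(mills w) + 7*w^2 - 4) * ((mills w)^2 - w*(mills w))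
      + (-12*(mills w)^2 + 14*w*(mills w) - 3*w^2 + 3) ≤ 0 := by
    rw [hasDerivAt_iff_tendsto_slope] at hd
    have hsub : Set.Ioi w ⊆ {w}ᶜ := fun y hy => Set.mem_compl_singleton_iff.mpr (ne_of_gt hy)
    have hd' := hd.mono_left (nhdsWithin_mono w hsub)
    refine le_of_tendsto hd' ?_
    filter_upwards [self_mem_nhdsWithin] with v hv
    have hv' : w < v := hv
    rw [slope_def_field]
    rw [hzero]
    apply div_nonpos_of_nonpos_of_nonneg
    · simpa using (hafter v hv').le
    · linarith
  have ht := mills_sub_pos w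
  have hq : (mills w - w)*w^2 + (6*(mills w - w)^2 - 1)*w
      + 6*(mills w - w)^3 - 4*(mills w - w) = 0 := by
    have h := hzero
    unfold Hfun at h
    linear_combination h
  have hcert := cert (mills w - w) w ht hw0 hq
  nlinarith [hcert, hDle]

/-! ### The derivative of g -/

lemma gfun_hasDeriv (u : ℝ) : HasDerivAt gfun (2*(mills u)^2 * Hfun u) u := by
  have hm := mills_hasDeriv u
  have hm2 : HasDerivAt (fun v => (mills v)^2) (2*(mills u)*((mills u)^2 - u*mills u)) u := by
    have := hm.pow 2
    refine this.congr_deriv ?_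
    all_goals (push_cast; ring)
  have hinner : HasDerivAt (fun v => 3 * mills v ^ 2 - 4 * v * mills v + v ^ 2 - 2)
      (3*(2*(mills u)*((mills u)^2 - u*mills u))
        - (4*(mills u) + (4*u)*((mills u)^2 - u*mills u)) + 2*u) u := by
    have h1 : HasDerivAt (fun v => 3 * mills v ^ 2)
        (3*(2*(mills u)*((mills u)^2 - u*mills u))) u := hm2.const_mul (3:ℝ)
    have h4v : HasDerivAt (fun v : ℝ => 4*v) 4 u := by
      simpa using (hasDerivAt_id u).const_mul (4:ℝ)
    have h2 : HasDerivAt (fun v => 4 * v * mills v)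
        (4*(mills u) + (4*u)*((mills u)^2 - u*mills u)) u := h4v.mul hm
    have h3 : HasDerivAt (fun v : ℝ => v^2) (2*u) u := by
      simpa using hasDerivAt_pow 2 u
    exact ((h1.sub h2).add h3).sub_const 2
  have hcomb := hm2.mul hinner
  have hfe : gfun = fun v => mills v ^ 2 * (3 * mills v ^ 2 - 4 * v * mills v + v ^ 2 - 2) := rfl
  rw [hfe]
  refine hcomb.congr_deriv ?_
  unfold Hfun
  ring

/-! ### Values at 0 -/

lemma gPhi_zero : gPhi 0 = 1/2 := by
  have h1 : gPhi 0 + ∫ s in Set.Ioi (0:ℝ), gphi s = 1 := by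
    have h := intervalIntegral.integral_Iic_add_Ioi (b := (0:ℝ)) (f := gphi) (μ := volume)
      gphi_integrable.integrableOn gphi_integrable.integrableOn
    rw [gphi_integral] at h
    exact h
  have heven : ∀ x : ℝ, gphi (-x) = gphi x := by
    intro x
    unfold gphi
    rw [neg_pow]
    norm_num
  have h2 : ∫ s in Set.Ioi (0:ℝ), gphi s = gPhi 0 := by
    have h3 : ∫ x in Set.Iic (0:ℝ), gphi (-x) = ∫ x in Set.Ioi (-(0:ℝ)), gphi x :=
      integral_comp_neg_Iic 0 gphi
    simp only [neg_zero] at h3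
    have h4 : ∫ x in Set.Iic (0:ℝ), gphi (-x) = ∫ x in Set.Iic (0:ℝ), gphi x := by
      congr 1
      funext x
      exact heven x
    rw [h4] at h3
    unfold gPhi
    linarith
  linarith

lemma mills_zero_sq : mills 0 ^ 2 = 2 / Real.pi := by
  have h0 : gphi 0 = 1 / Real.sqrt (2 * Real.pi) := by
    unfold gphi
    norm_num
  have hm : mills 0 = 2 / Real.sqrt (2 * Real.pi) := by
    unfold mills gPhiBar
    rw [gPhi_zero, h0]
    rw [show (1:ℝ) - 1/2 = 1/2 by norm_num]
    field_simp
  rw [hm, div_pow, Real.sq_sqrt (by positivity : (0:ℝ) ≤ 2 * Real.pi)]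
  ring

/-! ### Main theorem -/

theorem stmt_10 :
    StrictAntiOn gfun (Set.Ici (0 : ℝ)) ∧
    (∀ u : ℝ, 0 ≤ u → gfun u ≤ gfun 0) ∧
    gfun 0 = 12 / Real.pi ^ 2 - 4 / Real.pi ∧
    gfun 0 = -(4 * (Real.pi - 3)) / Real.pi ^ 2 := by
  have hSA : StrictAntiOn gfun (Set.Ici (0 : ℝ)) := by
    apply strictAntiOn_of_deriv_neg (convex_Ici 0)
    · exact fun x _ => (gfun_hasDeriv x).continuousAt.continuousWithinAt
    · intro x hx
      rw [interior_Ici] at hx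
      rw [(gfun_hasDeriv x).deriv]
      have h1 : 0 < 2*(mills x)^2 := by
        have := mills_pos x
        positivity
      exact mul_neg_of_pos_of_neg h1 (Hfun_neg x (le_of_lt hx))
  have hval : gfun 0 = 12 / Real.pi ^ 2 - 4 / Real.pi := by
    have h := mills_zero_sq
    unfold gfun
    rw [h]
    have hπ : Real.pi ≠ 0 := Real.pi_ne_zero
    field_simp
    ring
  refine ⟨hSA, ?_, hval, ?_⟩
  · intro u hu
    rcases eq_or_lt_of_le hu with h | h
    · rw [← h]
    · exact (hSA Set.self_mem_Ici hu h).le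
  · rw [hval]
    have hπ : Real.pi ≠ 0 := Real.pi_ne_zero
    field_simp
    ring
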